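/- For 0 < δ < 1, the equation tan(α) = α/(1−δ) has a unique solution α_M in the interval (0, π/2), and α_M → 0 as δ → 0 with the asymptotic α_M² = 3δ + O(δ²); in particular α_M ≈ √(3δ) for small δ. -/

import Mathlib

open Real Filter Asymptotics
open Set

private lemma aux_nonneg {f f' : ℝ → ℝ} (hf : ∀ x, HasDerivAt f (f' x) x)
    (h0 : f 0 = 0) (hpos : ∀ x, 0 ≤ x → 0 ≤ f' x) {x : ℝ} (hx : 0 ≤ x) : 0 ≤ f x := by
  rcases eq_or_lt_of_le hx with rfl | hx'
  · exact h0.ge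
  have hmono : MonotoneOn f (Icc 0 x) := by
    apply monotoneOn_of_deriv_nonneg (convex_Icc 0 x)
      (fun y _ => (hf y).continuousAt.continuousWithinAt)
      (fun y _ => ((hf y).differentiableAt).differentiableWithinAt)
    intro y hy
    rw [interior_Icc] at hy
    rw [(hf y).deriv]
    exact hpos y hy.1.le
  have := hmono (Set.left_mem_Icc.2 hx) (Set.right_mem_Icc.2 hx) hx
  rwa [h0] at this

private lemma sin_ge {x : ℝ} (hx : 0 ≤ x) : x - x ^ 3 / 6 ≤ Real.sin x := by
  have h := aux_nonneg (f := fun x => Real.sin x - (x - x ^ 3 / 6))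
    (f' := fun x => Real.cos x - (1 - x ^ 2 / 2)) ?_ (by norm_num) ?_ hx
  · linarith [h]
  · intro y
    have h1 : HasDerivAt (fun x : ℝ => x - x ^ 3 / 6) (1 - (3 : ℕ) * y ^ 2 / 6) y :=
      (hasDerivAt_id y).sub ((hasDerivAt_pow 3 y).div_const 6)
    have := (Real.hasDerivAt_sin y).sub h1
    refine this.congr_deriv ?_
    push_cast; ring
  · intro y _
    have := Real.one_sub_sq_div_two_le_cos (x := y)
    linarith

private lemma cos_le {x : ℝ} (hx : 0 ≤ x) : Real.cos x ≤ 1 - x ^ 2 / 2 + x ^ 4 / 24 := by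
  have h := aux_nonneg (f := fun x => 1 - x ^ 2 / 2 + x ^ 4 / 24 - Real.cos x)
    (f' := fun x => -x + x ^ 3 / 6 + Real.sin x) ?_ (by norm_num) ?_ hx
  · linarith [h]
  · intro y
    have h1 : HasDerivAt (fun x : ℝ => 1 - x ^ 2 / 2 + x ^ 4 / 24)
        (-((2:ℕ) * y ^ 1 / 2) + (4:ℕ) * y ^ 3 / 24) y := by
      have := (((hasDerivAt_pow 2 y).div_const 2).const_sub 1).add ((hasDerivAt_pow 4 y).div_const 24)
      exact this.congr_deriv (by norm_num)
    have := h1.sub (Real.hasDerivAt_cos y)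
    refine this.congr_deriv ?_
    push_cast; ring
  · intro y hy
    have := sin_ge hy
    linarith

private lemma sin_le5 {x : ℝ} (hx : 0 ≤ x) : Real.sin x ≤ x - x ^ 3 / 6 + x ^ 5 / 120 := by
  have h := aux_nonneg (f := fun x => x - x ^ 3 / 6 + x ^ 5 / 120 - Real.sin x)
    (f' := fun x => 1 - x ^ 2 / 2 + x ^ 4 / 24 - Real.cos x) ?_ (by norm_num) ?_ hx
  · linarith [h]
  · intro y
    have h1 : HasDerivAt (fun x : ℝ => x - x ^ 3 / 6 + x ^ 5 / 120)
        (1 - (3:ℕ) * y ^ 2 / 6 + (5:ℕ) * y ^ 4 / 120) y :=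
      ((hasDerivAt_id y).sub ((hasDerivAt_pow 3 y).div_const 6)).add
        ((hasDerivAt_pow 5 y).div_const 120)
    have := h1.sub (Real.hasDerivAt_sin y)
    refine this.congr_deriv ?_
    push_cast; ring
  · intro y hy
    have := cos_le hy
    linarith

private lemma tan_lower {x : ℝ} (hx : 0 ≤ x) (hx2 : x < π / 2) :
    x + x ^ 3 / 3 ≤ Real.tan x := by
  have hcos : 0 < Real.cos x :=
    Real.cos_pos_of_mem_Ioo ⟨by linarith [Real.pi_div_two_pos], hx2⟩
  rw [Real.tan_eq_sin_div_cos, le_div_iff₀ hcos]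
  have hxlt : x < 2 := by nlinarith [Real.pi_le_four]
  have h1 := sin_ge hx
  have h2 := cos_le hx
  have hmul : (x + x ^ 3 / 3) * Real.cos x ≤ (x + x ^ 3 / 3) * (1 - x ^ 2 / 2 + x ^ 4 / 24) := by
    apply mul_le_mul_of_nonneg_left h2
    positivity
  have h9 : x ^ 7 ≤ 9 * x ^ 5 := by
    nlinarith [pow_nonneg hx 5, mul_le_mul_of_nonneg_left (show x ^ 2 ≤ 4 by nlinarith) (pow_nonneg hx 5)]
  have hpoly : (x + x ^ 3 / 3) * (1 - x ^ 2 / 2 + x ^ 4 / 24) ≤ x - x ^ 3 / 6 := by nlinarith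
  linarith

private lemma tan_upper {x : ℝ} (hx : 0 ≤ x) (hx1 : x ≤ 1) :
    Real.tan x ≤ x + x ^ 3 / 3 + x ^ 5 := by
  have hcos : 1 - x ^ 2 / 2 ≤ Real.cos x := Real.one_sub_sq_div_two_le_cos
  have hcospos : 0 < Real.cos x := by nlinarith
  rw [Real.tan_eq_sin_div_cos, div_le_iff₀ hcospos]
  have h1 := sin_le5 hx
  have hmul : (x + x ^ 3 / 3 + x ^ 5) * (1 - x ^ 2 / 2) ≤ (x + x ^ 3 / 3 + x ^ 5) * Real.cos x := by
    apply mul_le_mul_of_nonneg_left hcos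
    positivity
  have h7 : x ^ 7 ≤ x ^ 5 := pow_le_pow_of_le_one hx hx1 (by norm_num)
  have hpoly : x - x ^ 3 / 6 + x ^ 5 / 120 ≤ (x + x ^ 3 / 3 + x ^ 5) * (1 - x ^ 2 / 2) := by nlinarith [pow_nonneg hx 5]
  linarith

private lemma gconv {δ : ℝ} (hδ : δ ∈ Set.Ioo (0:ℝ) 1) :
    StrictConvexOn ℝ (Set.Ico 0 (π / 2)) (fun x => (1 - δ) * Real.tan x - x) := by
  have hδ1 : 0 < 1 - δ := by linarith [hδ.2]
  apply strictConvexOn_of_deriv2_pos (convex_Ico 0 (π / 2))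
  · intro x hx
    have hcos : Real.cos x ≠ 0 :=
      (Real.cos_pos_of_mem_Ioo ⟨by linarith [Real.pi_div_two_pos, hx.1], hx.2⟩).ne'
    exact ((continuousAt_const.mul (Real.continuousAt_tan.2 hcos)).sub continuousAt_id).continuousWithinAt
  · intro x hx
    rw [interior_Ico] at hx
    have hcosx : 0 < Real.cos x :=
      Real.cos_pos_of_mem_Ioo ⟨by linarith [Real.pi_div_two_pos, hx.1], hx.2⟩
    have hsinx : 0 < Real.sin x := Real.sin_pos_of_pos_of_lt_pi hx.1 (by linarith [Real.pi_pos, hx.2])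
    simp only [Function.iterate_succ, Function.iterate_zero, Function.comp_apply, id_eq]
    have hEq : deriv (fun x => (1 - δ) * Real.tan x - x)
        =ᶠ[nhds x] fun y => (1 - δ) * (1 / Real.cos y ^ 2) - 1 := by
      have hmem : Set.Ioo (-(π/2)) (π/2) ∈ nhds x :=
        isOpen_Ioo.mem_nhds ⟨by linarith [Real.pi_div_two_pos, hx.1], hx.2⟩
      filter_upwards [hmem] with y hy
      have hcy : Real.cos y ≠ 0 := (Real.cos_pos_of_mem_Ioo hy).ne'
      exact (((Real.hasDerivAt_tan hcy).const_mul (1 - δ)).sub (hasDerivAt_id y)).deriv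
    rw [hEq.deriv_eq]
    have hc2 : HasDerivAt (fun y : ℝ => Real.cos y ^ 2) ((2:ℕ) * Real.cos x ^ 1 * -Real.sin x) x :=
      (Real.hasDerivAt_cos x).pow 2
    have hne : Real.cos x ^ 2 ≠ 0 := by positivity
    have hinv := hc2.inv hne
    have hfin := (hinv.const_mul (1 - δ)).sub_const 1
    have heq2 : (fun y => (1 - δ) * (1 / Real.cos y ^ 2) - 1)
        = fun y => (1 - δ) * (Real.cos y ^ 2)⁻¹ - 1 := by
      funext y; rw [one_div]
    rw [heq2, show deriv (fun y => (1 - δ) * (Real.cos y ^ 2)⁻¹ - 1) x = _ from hfin.deriv]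
    have : -((2:ℕ) * Real.cos x ^ 1 * -Real.sin x) / (Real.cos x ^ 2) ^ 2
        = 2 * Real.sin x / Real.cos x ^ 3 := by
      field_simp; ring
    rw [this]
    positivity

private lemma uniq_sol {δ a b : ℝ} (hδ : δ ∈ Set.Ioo (0:ℝ) 1)
    (ha : a ∈ Set.Ioo 0 (π / 2)) (hb : b ∈ Set.Ioo 0 (π / 2))
    (hta : Real.tan a = a / (1 - δ)) (htb : Real.tan b = b / (1 - δ)) (hab : a < b) : False := by
  have hδ1 : 0 < 1 - δ := by linarith [hδ.2]
  set g : ℝ → ℝ := fun x => (1 - δ) * Real.tan x - x with hg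
  have hga : g a = 0 := by simp only [hg, hta]; field_simp; ring
  have hgb : g b = 0 := by simp only [hg, htb]; field_simp; ring
  have hcv := gconv hδ
  have h0mem : (0:ℝ) ∈ Set.Ico 0 (π / 2) := ⟨le_refl _, Real.pi_div_two_pos⟩
  have hbmem : b ∈ Set.Ico 0 (π / 2) := ⟨hb.1.le, hb.2⟩
  have hbne : (0:ℝ) ≠ b := (ne_of_lt hb.1)
  have ht : 0 < (b - a) / b := div_pos (by linarith) hb.1
  have hs : 0 < a / b := div_pos ha.1 hb.1
  have hts : (b - a) / b + a / b = 1 := by field_simp; ring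
  have key := hcv.2 h0mem hbmem hbne ht hs hts
  simp only [smul_eq_mul, mul_zero, zero_add, Real.tan_zero, sub_zero, mul_zero, add_zero] at key
  have hval : a / b * b = a := div_mul_cancel₀ a (ne_of_gt hb.1)
  rw [hval, hta, htb] at key
  have e1 : (1 - δ) * (a / (1 - δ)) = a := by field_simp
  have e2 : (1 - δ) * (b / (1 - δ)) = b := by field_simp
  rw [e1, e2] at key
  simp at key

private lemma exists_sol {δ : ℝ} (hδ : δ ∈ Set.Ioo (0:ℝ) 1) :
    ∃ α : ℝ, α ∈ Set.Ioo 0 (π / 2) ∧ Real.tan α = α / (1 - δ) := by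
  have hδ1 : 0 < 1 - δ := by linarith [hδ.2]
  set g : ℝ → ℝ := fun x => (1 - δ) * Real.tan x - x with hg
  set a : ℝ := min (Real.sqrt δ) 1 with hadef
  have ha0 : 0 < a := lt_min (Real.sqrt_pos.2 hδ.1) one_pos
  have ha1 : a ≤ 1 := min_le_right _ _
  have hapi : a < π / 2 := lt_of_le_of_lt ha1 (by linarith [Real.pi_gt_three])
  have hasq : a ^ 2 ≤ δ := by
    have h1 : a ≤ Real.sqrt δ := min_le_left _ _
    have := Real.sq_sqrt hδ.1.le
    nlinarith [Real.sqrt_nonneg δ]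
  have hcosa : 1 - δ < Real.cos a := by
    have := Real.one_sub_sq_div_two_le_cos (x := a)
    nlinarith [hδ.1]
  have hcosapos : 0 < Real.cos a := by linarith
  have hga : g a < 0 := by
    have hsina : 0 < Real.sin a := Real.sin_pos_of_pos_of_lt_pi ha0 (by linarith [Real.pi_gt_three])
    have htana : Real.tan a = Real.sin a / Real.cos a := Real.tan_eq_sin_div_cos a
    have h1 : (1 - δ) * (Real.sin a / Real.cos a) < Real.cos a * (Real.sin a / Real.cos a) :=
      mul_lt_mul_of_pos_right hcosa (div_pos hsina hcosapos)
    rw [mul_div_cancel₀ _ (ne_of_gt hcosapos)] at h1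
    have h2 : Real.sin a < a := Real.sin_lt ha0
    simp only [hg]
    rw [Real.tan_eq_sin_div_cos]
    linarith
  -- find b close to π/2 with large tan
  have hev1 := Real.tendsto_tan_pi_div_two.eventually_ge_atTop ((π / 2) / (1 - δ))
  have hev2 : Set.Ioo a (π / 2) ∈ nhdsWithin (π / 2) (Set.Iio (π / 2)) :=
    Ioo_mem_nhdsLT_of_mem ⟨hapi, le_refl _⟩
  obtain ⟨b, htb, hbmem⟩ := (hev1.and (eventually_of_mem hev2 fun y hy => hy)).exists
  have hgb : 0 < g b := by
    have h1 : (π / 2) ≤ (1 - δ) * Real.tan b := by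
      rw [div_le_iff₀ hδ1] at htb
      linarith [htb]
    simp only [hg]
    linarith [hbmem.2]
  -- IVT
  have hcont : ContinuousOn g (Set.Icc a b) := by
    intro x hx
    have hcos : Real.cos x ≠ 0 := by
      refine (Real.cos_pos_of_mem_Ioo ⟨?_, ?_⟩).ne'
      · linarith [Real.pi_div_two_pos, hx.1, ha0]
      · exact lt_of_le_of_lt hx.2 hbmem.2
    exact ((continuousAt_const.mul (Real.continuousAt_tan.2 hcos)).sub continuousAt_id).continuousWithinAt
  have h0mem : (0:ℝ) ∈ Set.Ioo (g a) (g b) := ⟨hga, hgb⟩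
  obtain ⟨α, hαmem, hgα⟩ := intermediate_value_Ioo hbmem.1.le hcont h0mem
  refine ⟨α, ⟨lt_trans ha0 hαmem.1, lt_trans hαmem.2 hbmem.2⟩, ?_⟩
  have : (1 - δ) * Real.tan α = α := by
    simp only [hg] at hgα
    linarith [hgα]
  field_simp
  linarith [this]

theorem stmt13 :
    (∀ δ : ℝ, δ ∈ Set.Ioo (0:ℝ) 1 →
      ∃! α : ℝ, α ∈ Set.Ioo 0 (π / 2) ∧ Real.tan α = α / (1 - δ)) ∧
    ∀ αM : ℝ → ℝ,
      (∀ δ : ℝ, δ ∈ Set.Ioo (0:ℝ) 1 →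
        αM δ ∈ Set.Ioo 0 (π / 2) ∧ Real.tan (αM δ) = αM δ / (1 - δ)) →
      (Tendsto αM (nhdsWithin 0 (Set.Ioi 0)) (nhds 0) ∧
        (fun δ => (αM δ) ^ 2 - 3 * δ) =O[nhdsWithin 0 (Set.Ioi 0)] fun δ => δ ^ 2) := by
  constructor
  · intro δ hδ
    obtain ⟨α, hmem, heq⟩ := exists_sol hδ
    refine ⟨α, ⟨hmem, heq⟩, ?_⟩
    rintro y ⟨hymem, hyeq⟩
    rcases lt_trichotomy y α with h | h | h
    · exact (uniq_sol hδ hymem hmem hyeq heq h).elim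
    · exact h
    · exact (uniq_sol hδ hmem hymem heq hyeq h).elim
  · intro αM hαM
    have key : ∀ δ : ℝ, δ ∈ Set.Ioo (0:ℝ) 1 → 0 < αM δ ∧ (αM δ) ^ 2 * (1 - δ) ≤ 3 * δ := by
      intro δ hδ
      obtain ⟨⟨hα0, hα2⟩, heq⟩ := hαM δ hδ
      have hδ1 : 0 < 1 - δ := by linarith [hδ.2]
      have hlow := tan_lower hα0.le hα2
      rw [heq, le_div_iff₀ hδ1] at hlow
      refine ⟨hα0, ?_⟩
      nlinarith [hlow, hα0, mul_pos hα0 hα0]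
    constructor
    · have h6 : Tendsto (fun δ : ℝ => 6 * δ) (nhdsWithin 0 (Set.Ioi 0)) (nhds 0) := by
        have hc : Continuous (fun δ : ℝ => 6 * δ) := continuous_const.mul continuous_id
        have h := hc.tendsto (0 : ℝ)
        rw [mul_zero] at h
        exact h.mono_left nhdsWithin_le_nhds
      have hsqrt := (Real.continuous_sqrt.tendsto 0).comp h6
      rw [Real.sqrt_zero] at hsqrt
      refine tendsto_of_tendsto_of_tendsto_of_le_of_le' (g := fun _ => (0:ℝ))
        tendsto_const_nhds hsqrt ?_ ?_
      · filter_upwards [Ioo_mem_nhdsGT_of_mem (show (0:ℝ) ∈ Set.Ico 0 1 by constructor <;> norm_num)]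
          with δ hδ
        exact (key δ hδ).1.le
      · filter_upwards [Ioo_mem_nhdsGT_of_mem (show (0:ℝ) ∈ Set.Ico 0 (1/2) by constructor <;> norm_num)]
          with δ hδ
        have hδ' : δ ∈ Set.Ioo (0:ℝ) 1 := ⟨hδ.1, by linarith [hδ.2]⟩
        obtain ⟨hα0, h2⟩ := key δ hδ'
        have hα6 : (αM δ) ^ 2 ≤ 6 * δ := by nlinarith [hδ.2, sq_nonneg (αM δ)]
        calc αM δ = Real.sqrt ((αM δ) ^ 2) := (Real.sqrt_sq hα0.le).symm
          _ ≤ Real.sqrt (6 * δ) := Real.sqrt_le_sqrt hα6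
    · rw [isBigO_iff]
      refine ⟨39, ?_⟩
      filter_upwards [Ioo_mem_nhdsGT_of_mem (show (0:ℝ) ∈ Set.Ico 0 (1/6) by constructor <;> norm_num)]
        with δ hδ6
      have hδ : δ ∈ Set.Ioo (0:ℝ) 1 := ⟨hδ6.1, by linarith [hδ6.2]⟩
      have hδ1 : 0 < 1 - δ := by linarith [hδ.2]
      obtain ⟨⟨hα0, hα2⟩, heq⟩ := hαM δ hδ
      obtain ⟨-, h2⟩ := key δ hδ
      set α := αM δ with hα
      have hα18 : α ^ 2 ≤ 18 / 5 * δ := by nlinarith [hδ6.2, sq_nonneg α]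
      have hα1 : α ≤ 1 := by nlinarith [hδ6.2, hα0]
      have hup := tan_upper hα0.le hα1
      rw [heq, div_le_iff₀ hδ1] at hup
      have hd1 : δ * α ≤ α ^ 3 / 3 + α ^ 5 := by
        nlinarith [hup, mul_nonneg hδ.1.le (pow_nonneg hα0.le 3),
          mul_nonneg hδ.1.le (pow_nonneg hα0.le 5)]
      have hd2 : 3 * δ ≤ α ^ 2 + 3 * α ^ 4 := by nlinarith [hd1, hα0]
      have hd3 : α ^ 4 ≤ (18 / 5 * δ) ^ 2 := by
        nlinarith [mul_self_le_mul_self (sq_nonneg α) hα18]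
      rw [Real.norm_eq_abs, Real.norm_eq_abs, abs_of_nonneg (sq_nonneg δ), abs_le]
      constructor
      · nlinarith [hd2, hd3]
      · nlinarith [mul_le_mul_of_nonneg_right hα18 hδ.1.le, h2, hδ.1]
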